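/- (Theorem A, one-variable version.) Let G ⊆ ℂ be a domain, S a set, A ∈ G, and H_j : S × G → G functions holomorphic in the second variable, each mapping S × G into a fixed compact set N ⊆ G containing A in its interior, with H_j(s,·) holomorphic on G for each s. Suppose Σ_j sup_{s∈S, z∈N} |H_j(s,z) − A| < ∞. Then the nested compositions φ_m(s,z) = H_1(s, H_2(s, … H_m(s,z)…)) converge uniformly for s ∈ S and z ∈ N as m → ∞, and the limit is independent of z. -/
import Mathlib


open Filter Topology

/-- `nestComp H m s z = H 1 (s, H 2 (s, … H m (s, z) …))`, with `nestComp H 0 s z = z`. -/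
def nestComp {α : Type*} (H : ℕ → α → ℂ → ℂ) : ℕ → α → ℂ → ℂ
  | 0 => fun _ z => z
  | m + 1 => fun s z => nestComp H m s (H (m + 1) s z)

/-- Theorem A, one-variable version: convergence of infinite compositions. -/
theorem theoremA
    {α : Type*} (G N : Set ℂ) (hG : IsOpen G) (hGc : IsConnected G)
    (hN : IsCompact N) (hNG : N ⊆ G) (A : ℂ) (hA : A ∈ interior N)
    (H : ℕ → α → ℂ → ℂ)
    (hmaps : ∀ j, ∀ s : α, ∀ z ∈ G, H j s z ∈ N)
    (hhol : ∀ j, ∀ s : α, DifferentiableOn ℂ (H j s) G)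
    (ρ : ℕ → ℝ) (hρ : Summable ρ)
    (hb : ∀ j, ∀ s : α, ∀ z ∈ N, ‖H j s z - A‖ ≤ ρ j) :
    ∃ f : α → ℂ,
      TendstoUniformlyOn (fun m (p : α × ℂ) => nestComp H m p.1 p.2)
        (fun p => f p.1) atTop ((Set.univ : Set α) ×ˢ N) := by
  classical
  rcases isEmpty_or_nonempty α with hα | hα
  · refine ⟨fun _ => 0, ?_⟩
    intro u hu
    filter_upwards with m p hp
    exact (hα.false p.1).elim
  obtain ⟨s₀⟩ := hα
  have hAN : A ∈ N := interior_subset hA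
  have hAG : A ∈ G := hNG hAN
  have hρ0 : ∀ j, 0 ≤ ρ j := fun j => le_trans (norm_nonneg _) (hb j s₀ A hAN)
  -- radius
  obtain ⟨ε, hε, hball⟩ := Metric.isOpen_iff.1 hG A hAG
  set r : ℝ := ε / 3 with hrdef
  have hr : 0 < r := by positivity
  have hsubG : Metric.closedBall A (2 * r) ⊆ G := by
    intro x hx
    apply hball
    have : dist x A ≤ 2 * r := Metric.mem_closedBall.1 hx
    have : dist x A < ε := by
      rw [hrdef] at this; linarith
    exact this
  -- bound on N
  obtain ⟨M, hM⟩ := hN.isBounded.subset_closedBall 0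
  have hMn : ∀ w ∈ N, ‖w‖ ≤ M := fun w hw => mem_closedBall_zero_iff.1 (hM hw)
  -- Lipschitz bound on closedBall A r for holomorphic maps G → N
  have lip : ∀ g : ℂ → ℂ, DifferentiableOn ℂ g G → (∀ z ∈ G, g z ∈ N) →
      ∀ w₁ ∈ Metric.closedBall A r, ∀ w₂ ∈ Metric.closedBall A r,
        ‖g w₁ - g w₂‖ ≤ (M / r) * ‖w₁ - w₂‖ := by
    intro g hg hgN w₁ hw₁ w₂ hw₂
    have hdiff : ∀ x ∈ Metric.closedBall A r, DifferentiableAt ℂ g x := by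
      intro x hx
      refine hg.differentiableAt (hG.mem_nhds (hsubG ?_))
      exact Metric.closedBall_subset_closedBall (by linarith) hx
    have hderiv : ∀ x ∈ Metric.closedBall A r, ‖deriv g x‖ ≤ M / r := by
      intro x hx
      have hsub2 : Metric.closedBall x r ⊆ G := by
        refine subset_trans ?_ hsubG
        intro y hy
        have h1 : dist y x ≤ r := Metric.mem_closedBall.1 hy
        have h2 : dist x A ≤ r := Metric.mem_closedBall.1 hx
        exact Metric.mem_closedBall.2 ((dist_triangle y x A).trans (by linarith))
      refine Complex.norm_deriv_le_of_forall_mem_sphere_norm_le hr ?_ ?_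
      · refine DifferentiableOn.diffContOnCl ?_
        rw [closure_ball x hr.ne']
        exact hg.mono hsub2
      · intro z hz
        have hzG : z ∈ G := hsub2 (Metric.sphere_subset_closedBall hz)
        exact hMn _ (hgN z hzG)
    exact (convex_closedBall A r).norm_image_sub_le_of_norm_deriv_le hdiff hderiv hw₂ hw₁
  set C : ℝ := max (M / r) 1 with hCdef
  have hC1 : (1 : ℝ) ≤ C := le_max_right _ _
  have hC0 : (0 : ℝ) ≤ C := le_trans zero_le_one hC1
  -- properties of nestComp
  have hφ : ∀ m, ∀ s : α, (∀ z ∈ G, nestComp H (m + 1) s z ∈ N) ∧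
      DifferentiableOn ℂ (nestComp H (m + 1) s) G := by
    intro m
    induction m with
    | zero =>
      intro s
      constructor
      · intro z hz
        simpa [nestComp] using hmaps 1 s z hz
      · have : nestComp H 1 s = H 1 s := by funext z; simp [nestComp]
        rw [this]; exact hhol 1 s
    | succ m ih =>
      intro s
      constructor
      · intro z hz
        exact (ih s).1 _ (hNG (hmaps (m + 2) s z hz))
      · have hcomp : nestComp H (m + 2) s = (nestComp H (m + 1) s) ∘ (H (m + 2) s) := by
          funext z; simp [nestComp, Function.comp]
        rw [hcomp]
        exact DifferentiableOn.comp (ih s).2 (hhol (m + 2) s)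
          (fun z hz => hNG (hmaps (m + 2) s z hz))
  -- uniform Lipschitz for all m
  have lipC : ∀ m, ∀ s : α, ∀ w₁ ∈ Metric.closedBall A r, ∀ w₂ ∈ Metric.closedBall A r,
      ‖nestComp H m s w₁ - nestComp H m s w₂‖ ≤ C * ‖w₁ - w₂‖ := by
    intro m s w₁ h1 w₂ h2
    cases m with
    | zero =>
      simp only [nestComp]
      calc ‖w₁ - w₂‖ = 1 * ‖w₁ - w₂‖ := (one_mul _).symm
        _ ≤ C * ‖w₁ - w₂‖ := mul_le_mul_of_nonneg_right hC1 (norm_nonneg _)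
    | succ m =>
      exact (lip _ (hφ m s).2 (hφ m s).1 w₁ h1 w₂ h2).trans
        (mul_le_mul_of_nonneg_right (le_max_left _ _) (norm_nonneg _))
  -- threshold J
  obtain ⟨J, hJ⟩ := eventually_atTop.1 ((hρ.tendsto_atTop_zero).eventually_lt_const hr)
  -- key one-step estimate
  have fact1 : ∀ (s : α), ∀ z ∈ N, ∀ k, J ≤ k + 1 →
      ‖nestComp H (k + 1) s z - nestComp H k s A‖ ≤ C * ρ (k + 1) := by
    intro s z hz k hk
    have hw1 : H (k + 1) s z ∈ Metric.closedBall A r := by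
      rw [Metric.mem_closedBall, dist_eq_norm]
      exact le_of_lt (lt_of_le_of_lt (hb (k + 1) s z hz) (hJ (k + 1) hk))
    have hw2 : A ∈ Metric.closedBall A r := Metric.mem_closedBall_self hr.le
    have heq : nestComp H (k + 1) s z = nestComp H k s (H (k + 1) s z) := by
      simp [nestComp]
    rw [heq]
    refine (lipC k s _ hw1 _ hw2).trans ?_
    refine mul_le_mul_of_nonneg_left ?_ hC0
    exact hb (k + 1) s z hz
  -- partial sums
  set P : ℕ → ℝ := fun m => ∑ j ∈ Finset.range (m + 1), ρ j with hPdef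
  set L : ℝ := ∑' j, ρ j with hLdef
  have hPmono : Monotone P := by
    intro a b hab
    exact Finset.sum_le_sum_of_subset_of_nonneg
      (Finset.range_subset_range.2 (by omega)) (fun i _ _ => hρ0 i)
  have hPL : ∀ m, P m ≤ L := fun m => Summable.sum_le_tsum _ (fun i _ => hρ0 i) hρ
  have hPlim : Tendsto P atTop (𝓝 L) := by
    have := hρ.hasSum.tendsto_sum_nat
    exact (tendsto_add_atTop_iff_nat 1).2 this
  -- difference estimate for anchored sequence
  have hDdiff : ∀ (s : α) (m n : ℕ), J ≤ m → m ≤ n →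
      ‖nestComp H n s A - nestComp H m s A‖ ≤ C * (P n - P m) := by
    intro s m n hJm hmn
    induction n, hmn using Nat.le_induction with
    | base => simp
    | succ n hmn ih =>
      have h1 : ‖nestComp H (n + 1) s A - nestComp H n s A‖ ≤ C * ρ (n + 1) :=
        fact1 s A hAN n (by omega)
      have hPs : P (n + 1) = P n + ρ (n + 1) := by
        simp [hPdef, Finset.sum_range_succ]
      calc ‖nestComp H (n + 1) s A - nestComp H m s A‖
          ≤ ‖nestComp H (n + 1) s A - nestComp H n s A‖ +
            ‖nestComp H n s A - nestComp H m s A‖ := norm_sub_le_norm_sub_add_norm_sub _ _ _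
        _ ≤ C * ρ (n + 1) + C * (P n - P m) := add_le_add h1 ih
        _ = C * (P (n + 1) - P m) := by rw [hPs]; ring
  -- existence of the limit
  have exL : ∀ s : α, ∃ l : ℂ, Tendsto (fun m => nestComp H m s A) atTop (𝓝 l) := by
    intro s
    have hcs : CauchySeq (fun m => nestComp H (m + J) s A) := by
      refine cauchySeq_of_le_tendsto_0' (fun n => C * (L - P (n + J))) ?_ ?_
      · intro n m hnm
        rw [dist_eq_norm, norm_sub_rev]
        refine (hDdiff s (n + J) (m + J) (by omega) (by omega)).trans ?_
        refine mul_le_mul_of_nonneg_left ?_ hC0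
        have := hPL (m + J)
        linarith
      · have h1 : Tendsto (fun n : ℕ => P (n + J)) atTop (𝓝 L) :=
          hPlim.comp (tendsto_add_atTop_nat J)
        have h2 : Tendsto (fun n : ℕ => C * (L - P (n + J))) atTop (𝓝 (C * (L - L))) :=
          (tendsto_const_nhds.sub h1).const_mul C
        simpa using h2
    obtain ⟨l, hl⟩ := cauchySeq_tendsto_of_complete hcs
    exact ⟨l, (tendsto_add_atTop_iff_nat J).1 hl⟩
  choose f hf using exL
  refine ⟨f, ?_⟩
  -- quantitative limit bound
  have hflim : ∀ (s : α) (m : ℕ), J ≤ m → ‖f s - nestComp H m s A‖ ≤ C * (L - P m) := by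
    intro s m hm
    have ht : Tendsto (fun n => ‖nestComp H n s A - nestComp H m s A‖) atTop
        (𝓝 ‖f s - nestComp H m s A‖) := ((hf s).sub_const _).norm
    refine le_of_tendsto ht ?_
    filter_upwards [eventually_ge_atTop m] with n hn
    refine (hDdiff s m n hm hn).trans ?_
    refine mul_le_mul_of_nonneg_left ?_ hC0
    have := hPL n
    linarith
  -- final bound
  have key : ∀ (s : α), ∀ z ∈ N, ∀ k, J ≤ k →
      dist (f s) (nestComp H (k + 1) s z) ≤ C * (L - P k) + C * ρ (k + 1) := by
    intro s z hz k hk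
    have h1 : ‖nestComp H (k + 1) s z - nestComp H k s A‖ ≤ C * ρ (k + 1) :=
      fact1 s z hz k (by omega)
    have h2 : ‖f s - nestComp H k s A‖ ≤ C * (L - P k) := hflim s k hk
    calc dist (f s) (nestComp H (k + 1) s z)
        = ‖f s - nestComp H (k + 1) s z‖ := dist_eq_norm _ _
      _ ≤ ‖f s - nestComp H k s A‖ + ‖nestComp H k s A - nestComp H (k + 1) s z‖ :=
          norm_sub_le_norm_sub_add_norm_sub _ _ _
      _ = ‖f s - nestComp H k s A‖ + ‖nestComp H (k + 1) s z - nestComp H k s A‖ := by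
          rw [norm_sub_rev (nestComp H k s A)]
      _ ≤ C * (L - P k) + C * ρ (k + 1) := add_le_add h2 h1
  rw [Metric.tendstoUniformlyOn_iff]
  intro ε' hε'
  have hten : Tendsto (fun k : ℕ => C * (L - P k) + C * ρ (k + 1)) atTop (𝓝 0) := by
    have h1 : Tendsto (fun k : ℕ => C * (L - P k)) atTop (𝓝 (C * (L - L))) :=
      (tendsto_const_nhds.sub hPlim).const_mul C
    have h2 : Tendsto (fun k : ℕ => C * ρ (k + 1)) atTop (𝓝 (C * 0)) :=
      ((hρ.tendsto_atTop_zero).comp (tendsto_add_atTop_nat 1)).const_mul C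
    have := h1.add h2
    simpa using this
  obtain ⟨K, hK⟩ := eventually_atTop.1 (hten.eventually_lt_const hε')
  filter_upwards [eventually_ge_atTop (max J K + 1)] with m hm
  intro p hp
  obtain ⟨k, rfl⟩ : ∃ k, m = k + 1 := ⟨m - 1, by omega⟩
  exact lt_of_le_of_lt (key p.1 p.2 hp.2 k (by omega)) (hK k (by omega))
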